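/- Let k be a field and let (x, y, z, w) ∈ k⁴ be nonzero. Let β be the 4 × 5 matrix over k with rows (y, z, w, 0, 0), (−x, 0, 0, z, w), (w, −x, 0, −y, 0), (−z, 0, −x, 0, −y). Then the row vector (x, y, z, w) multiplied by β is the zero vector in k⁵, and β has rank 3. -/
import Mathlib

open Matrix

/-- Rank of a submatrix (arbitrary row/column selections) is at most the rank. -/
lemma rank_submatrix_le' {k : Type*} [Field k] {m n l p : ℕ}
    (A : Matrix (Fin m) (Fin n) k) (f : Fin l → Fin m) (g : Fin p → Fin n) :
    (A.submatrix f g).rank ≤ A.rank := by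
  have h1 : ((1 : Matrix (Fin m) (Fin m) k).submatrix f (Equiv.refl (Fin m))) * A
      = A.submatrix f id := by
    rw [Matrix.one_submatrix_mul]
    rfl
  have h2 : (A.submatrix f id) * ((1 : Matrix (Fin n) (Fin n) k).submatrix (Equiv.refl (Fin n)) g)
      = A.submatrix f g := by
    rw [Matrix.mul_submatrix_one]
    simp [Matrix.submatrix_submatrix]
  calc (A.submatrix f g).rank
      = (((1 : Matrix (Fin m) (Fin m) k).submatrix f (Equiv.refl (Fin m))) * A
        * ((1 : Matrix (Fin n) (Fin n) k).submatrix (Equiv.refl (Fin n)) g)).rank := by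
        rw [h1, h2]
    _ ≤ (((1 : Matrix (Fin m) (Fin m) k).submatrix f (Equiv.refl (Fin m))) * A).rank :=
        Matrix.rank_mul_le_left _ _
    _ ≤ A.rank := Matrix.rank_mul_le_right _ _

lemma rank_ge_of_det_ne_zero {k : Type*} [Field k] {m n : ℕ}
    (A : Matrix (Fin m) (Fin n) k) (f : Fin 3 → Fin m) (g : Fin 3 → Fin n)
    (h : (A.submatrix f g).det ≠ 0) : 3 ≤ A.rank := by
  have hu : IsUnit (A.submatrix f g) :=
    (Matrix.isUnit_iff_isUnit_det _).mpr (isUnit_iff_ne_zero.mpr h)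
  have := Matrix.rank_of_isUnit _ hu
  rw [Fintype.card_fin] at this
  calc 3 = (A.submatrix f g).rank := this.symm
    _ ≤ A.rank := rank_submatrix_le' A f g

/-- For `(x, y, z, w) ≠ 0` in `k⁴`, the `4 × 5` matrix `β` with rows
`(y, z, w, 0, 0)`, `(−x, 0, 0, z, w)`, `(w, −x, 0, −y, 0)`, `(−z, 0, −x, 0, −y)`
satisfies `(x, y, z, w) · β = 0` and has rank `3`. -/
theorem stmt_13 (k : Type*) [Field k] (x y z w : k)
    (hxyzw : (x, y, z, w) ≠ (0, 0, 0, 0))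
    (β : Matrix (Fin 4) (Fin 5) k)
    (hβ : β = !![y, z, w, 0, 0;
                 -x, 0, 0, z, w;
                 w, -x, 0, -y, 0;
                 -z, 0, -x, 0, -y]) :
    Matrix.vecMul ![x, y, z, w] β = 0 ∧ β.rank = 3 := by
  subst hβ
  have hmul : Matrix.vecMul ![x, y, z, w]
      (!![y, z, w, 0, 0; -x, 0, 0, z, w; w, -x, 0, -y, 0; -z, 0, -x, 0, -y]) = 0 := by
    ext j
    fin_cases j <;>
      simp [Matrix.vecMul, dotProduct, Fin.sum_univ_four] <;> ring
  refine ⟨hmul, ?_⟩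
  set B := !![y, z, w, 0, 0; -x, 0, 0, z, w; w, -x, 0, -y, 0; -z, 0, -x, 0, -y] with hB
  -- upper bound
  have hv : (![x, y, z, w] : Fin 4 → k) ≠ 0 := by
    intro h
    apply hxyzw
    have h0 := congrFun h 0
    have h1 := congrFun h 1
    have h2 := congrFun h 2
    have h3 := congrFun h 3
    simp at h0 h1 h2 h3
    simp [h0, h1, h2, h3]
  have hker : (![x, y, z, w] : Fin 4 → k) ∈ LinearMap.ker (Bᵀ.mulVecLin) := by
    rw [LinearMap.mem_ker, Matrix.mulVecLin_apply, Matrix.mulVec_transpose]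
    exact hmul
  have hle : B.rank ≤ 3 := by
    rw [← Matrix.rank_transpose]
    have hrn := LinearMap.finrank_range_add_finrank_ker (Bᵀ.mulVecLin)
    have hdom : Module.finrank k (Fin 4 → k) = 4 := by simp
    rw [hdom] at hrn
    have hkpos : 0 < Module.finrank k (LinearMap.ker (Bᵀ.mulVecLin)) := by
      rw [Nat.pos_iff_ne_zero]
      intro h0
      rw [Submodule.finrank_eq_zero] at h0
      exact hv ((Submodule.mem_bot k).mp (h0 ▸ hker))
    have : Bᵀ.rank = Module.finrank k (LinearMap.range (Bᵀ.mulVecLin)) := rfl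
    omega
  -- lower bound: case on which coordinate is nonzero
  have hcases : x ≠ 0 ∨ y ≠ 0 ∨ z ≠ 0 ∨ w ≠ 0 := by
    by_contra h
    push_neg at h
    obtain ⟨hx, hy, hz, hw⟩ := h
    exact hxyzw (by simp [hx, hy, hz, hw])
  have hge : 3 ≤ B.rank := by
    rcases hcases with hx | hy | hz | hw
    · refine rank_ge_of_det_ne_zero B ![1, 2, 3] ![0, 1, 2] ?_
      have : (B.submatrix ![1, 2, 3] ![0, 1, 2]).det = -x ^ 3 := by
        rw [Matrix.det_fin_three]
        simp [hB]
        ring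
      rw [this]
      simpa using pow_ne_zero 3 hx
    · refine rank_ge_of_det_ne_zero B ![0, 2, 3] ![0, 3, 4] ?_
      have : (B.submatrix ![0, 2, 3] ![0, 3, 4]).det = y ^ 3 := by
        rw [Matrix.det_fin_three]
        simp [hB]
        ring
      rw [this]
      exact pow_ne_zero 3 hy
    · refine rank_ge_of_det_ne_zero B ![0, 1, 3] ![0, 1, 3] ?_
      have : (B.submatrix ![0, 1, 3] ![0, 1, 3]).det = -z ^ 3 := by
        rw [Matrix.det_fin_three]
        simp [hB]
        ring
      rw [this]
      simpa using pow_ne_zero 3 hz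
    · refine rank_ge_of_det_ne_zero B ![0, 1, 2] ![0, 2, 4] ?_
      have : (B.submatrix ![0, 1, 2] ![0, 2, 4]).det = w ^ 3 := by
        rw [Matrix.det_fin_three]
        simp [hB]
        ring
      rw [this]
      exact pow_ne_zero 3 hw
  omega
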